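/- Let (X,p,E) be an LNVL with E order complete, and suppose x_α →up x. Then p(|x| − |x| ∧ |x_α|) →o 0 and, if the net (x_α) is p-bounded, p(x) ≤ liminf_α p(x_α) in E. -/

import Mathlib

/-- Order convergence of a net `x : A → E` to `l` in a lattice-ordered group:
there is a decreasing net `y` (over some directed index) with infimum `0`
such that for each index `b`, eventually `|x a - l| ≤ y b`. -/
def OConv {A E : Type*} [Preorder A] [Lattice E] [AddCommGroup E]
    (x : A → E) (l : E) : Prop :=
  ∃ (K : Type) (s : K → K → Prop) (y : K → E),
    Nonempty K ∧
    (∀ b c : K, ∃ d : K, s b d ∧ s c d) ∧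
    (∀ b c : K, s b c → y c ≤ y b) ∧
    IsGLB (Set.range y) 0 ∧
    (∀ b : K, ∃ a₀ : A, ∀ a : A, a₀ ≤ a → |x a - l| ≤ y b)

/-- `p`-convergence of a net in a lattice-normed vector lattice. -/
def PConv {A X E : Type*} [Preorder A] [Lattice X] [AddCommGroup X]
    [Lattice E] [AddCommGroup E] (p : X → E) (x : A → X) (l : X) : Prop :=
  OConv (fun a => p (x a - l)) 0

set_option maxHeartbeats 1000000

section Aux

variable {X : Type*} [Lattice X] [AddCommGroup X] [CovariantClass X X (· + ·) (· ≤ ·)]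

lemma aux_nonneg (l v : X) : 0 ≤ |l| - |l| ⊓ |v| := by
  simpa [sub_nonneg] using inf_le_left (a := |l|) (b := |v|)

lemma aux_key (l v : X) : |l| - |l| ⊓ |v| ≤ |v - l| ⊓ |l| := by
  refine le_inf ?_ ?_
  · have h0 : |l| ≤ |v| + |v - l| := by
      have hv : v + (l - v) = l := by abel
      calc |l| = |v + (l - v)| := by rw [hv]
      _ ≤ |v| + |l - v| := abs_add_le _ _
      _ = |v| + |v - l| := by rw [abs_sub_comm]
    have h1 : |l| - |v - l| ≤ |v| := sub_le_iff_le_add.2 h0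
    have h3 : |l| - |v - l| ≤ |l| := sub_le_self _ (abs_nonneg _)
    have h4 : |l| - |v - l| ≤ |l| ⊓ |v| := le_inf h3 h1
    exact sub_le_comm.mp h4
  · exact sub_le_self _ (le_inf (abs_nonneg _) (abs_nonneg _))

end Aux

theorem up_convergence_liminf {X E : Type*}
    [Lattice X] [AddCommGroup X] [Module ℝ X] [CovariantClass X X (· + ·) (· ≤ ·)]
    [ConditionallyCompleteLattice E] [AddCommGroup E] [Module ℝ E]
    [CovariantClass E E (· + ·) (· ≤ ·)]
    {A : Type*} [Preorder A] [Nonempty A] [IsDirected A (· ≤ ·)]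
    (p : X → E)
    (hp_nonneg : ∀ x : X, 0 ≤ p x)
    (hp_eq_zero : ∀ x : X, p x = 0 ↔ x = 0)
    (hp_smul : ∀ (r : ℝ) (x : X), p (r • x) = |r| • p x)
    (hp_add : ∀ x y : X, p (x + y) ≤ p x + p y)
    (hp_mono : ∀ x y : X, |x| ≤ |y| → p x ≤ p y)
    (x : A → X) (l : X)
    (hup : ∀ u : X, 0 ≤ u → OConv (fun a => p (|x a - l| ⊓ u)) (0 : E)) :
    OConv (fun a => p (|l| - |l| ⊓ |x a|)) (0 : E) ∧
    ((∃ e : E, ∀ a, p (x a) ≤ e) →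
      p l ≤ ⨆ a : A, ⨅ b : {b : A // a ≤ b}, p (x b.1)) := by
  -- pointwise comparison
  have hcomp : ∀ a, p (|l| - |l| ⊓ |x a|) ≤ p (|x a - l| ⊓ |l|) := by
    intro a
    apply hp_mono
    rw [abs_of_nonneg (aux_nonneg l (x a)),
      abs_of_nonneg (le_inf (abs_nonneg _) (abs_nonneg _))]
    exact aux_key l (x a)
  obtain ⟨K, s, y, hK, hdir, hmono, hglb, hb⟩ := hup |l| (abs_nonneg l)
  have part1 : OConv (fun a => p (|l| - |l| ⊓ |x a|)) (0 : E) := by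
    refine ⟨K, s, y, hK, hdir, hmono, hglb, fun k => ?_⟩
    obtain ⟨a₀, ha₀⟩ := hb k
    refine ⟨a₀, fun a ha => ?_⟩
    have h1 := ha₀ a ha
    rw [sub_zero, abs_of_nonneg (hp_nonneg _)] at h1 ⊢
    exact (hcomp a).trans h1
  refine ⟨part1, ?_⟩
  rintro ⟨e, he⟩
  -- p l ≤ p (x a) + q a for each a
  have hkey : ∀ a, p l ≤ p (x a) + p (|l| - |l| ⊓ |x a|) := by
    intro a
    have h1 : p l ≤ p |l| := hp_mono l |l| (by rw [abs_abs])
    have h2 : p |l| ≤ p (|l| ⊓ |x a|) + p (|l| - |l| ⊓ |x a|) := by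
      have := hp_add (|l| ⊓ |x a|) (|l| - |l| ⊓ |x a|)
      simpa using this
    have h3 : p (|l| ⊓ |x a|) ≤ p (x a) := by
      apply hp_mono
      rw [abs_of_nonneg (le_inf (abs_nonneg _) (abs_nonneg _))]
      exact inf_le_right
    exact h1.trans (h2.trans (add_le_add_left h3 _))
  -- setup for liminf
  set S := ⨆ a : A, ⨅ b : {b : A // a ≤ b}, p (x b.1) with hS
  have hBddBelow : ∀ a : A, BddBelow (Set.range fun b : {b : A // a ≤ b} => p (x b.1)) :=
    fun a => ⟨0, by rintro _ ⟨b, rfl⟩; exact hp_nonneg _⟩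
  have hInfLe : ∀ a : A, (⨅ b : {b : A // a ≤ b}, p (x b.1)) ≤ e := fun a =>
    (ciInf_le (hBddBelow a) ⟨a, le_refl a⟩).trans (he a)
  have hBddAbove : BddAbove (Set.range fun a : A => ⨅ b : {b : A // a ≤ b}, p (x b.1)) :=
    ⟨e, by rintro _ ⟨a, rfl⟩; exact hInfLe a⟩
  -- for each k, p l - y k ≤ S
  have hmain : ∀ k : K, p l - S ≤ y k := by
    intro k
    obtain ⟨a₀, ha₀⟩ := hb k
    have hstep : p l - y k ≤ ⨅ b : {b : A // a₀ ≤ b}, p (x b.1) := by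
      refine le_ciInf fun b => ?_
      have h1 := ha₀ b.1 b.2
      rw [sub_zero, abs_of_nonneg (hp_nonneg _)] at h1
      have h2 : p (|l| - |l| ⊓ |x b.1|) ≤ y k := (hcomp b.1).trans h1
      have := (hkey b.1).trans (add_le_add_right h2 _)
      exact sub_le_iff_le_add.2 this
    have hstep2 : (⨅ b : {b : A // a₀ ≤ b}, p (x b.1)) ≤ S :=
      le_ciSup hBddAbove a₀
    have := hstep.trans hstep2
    -- p l - y k ≤ S ↔ p l - S ≤ y k
    exact sub_le_comm.mp this
  have hlb : p l - S ∈ lowerBounds (Set.range y) := by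
    rintro _ ⟨k, rfl⟩; exact hmain k
  have := hglb.2 hlb
  -- p l - S ≤ 0 → p l ≤ S
  exact sub_nonpos.mp this
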